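/- The dagger of the accumulation channel at a product prior is arrangement: for a distribution τ on Y and K ≥ 1, acc†_{τ^{⊗K}}(ψ) = arr(ψ) for every multiset ψ of size K with Multinomial[K](τ)(ψ) ≠ 0; that is, acc†_{τ^{⊗K}}(ψ)(y⃗) = 1/(ψ) if acc(y⃗)=ψ and 0 otherwise. -/

import Mathlib

open Finset

noncomputable def validity {X : Type*} [Fintype X] (ω p : X → ℝ) : ℝ := ∑ x, ω x * p x
noncomputable def updateD {X : Type*} [Fintype X] (ω p : X → ℝ) : X → ℝ :=
  fun x => ω x * p x / validity ω p
noncomputable def push {X Y : Type*} [Fintype X] (c : X → Y → ℝ) (ω : X → ℝ) : Y → ℝ :=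
  fun y => ∑ x, ω x * c x y
noncomputable def pull {X Y : Type*} [Fintype Y] (c : X → Y → ℝ) (q : Y → ℝ) : X → ℝ :=
  fun x => ∑ y, c x y * q y
noncomputable def dagger {X Y : Type*} [Fintype X] (c : X → Y → ℝ) (ω : X → ℝ) : Y → X → ℝ :=
  fun y x => ω x * c x y / push c ω y

def IsDist {X : Type*} [Fintype X] (ω : X → ℝ) : Prop :=
  (∀ x, 0 ≤ ω x) ∧ ∑ x, ω x = 1
def IsChannel {X Y : Type*} [Fintype Y] (c : X → Y → ℝ) : Prop :=
  ∀ x, IsDist (c x)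
def IsPred {X : Type*} (p : X → ℝ) : Prop := ∀ x, 0 ≤ p x ∧ p x ≤ 1

noncomputable def coefm {X : Type*} [Fintype X] [DecidableEq X] (K : ℕ) (φ : Sym X K) : ℝ :=
  (K.factorial : ℝ) / ∏ x, (((φ : Multiset X).count x).factorial : ℝ)
noncomputable def multinom {X : Type*} [Fintype X] [DecidableEq X] (K : ℕ) (ω : X → ℝ)
    (φ : Sym X K) : ℝ :=
  coefm K φ * ∏ x, ω x ^ ((φ : Multiset X).count x)
noncomputable def flrn {X : Type*} [DecidableEq X] (K : ℕ) (φ : Sym X K) : X → ℝ :=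
  fun x => ((φ : Multiset X).count x : ℝ) / K
def acc {X : Type*} {K : ℕ} (v : Fin K → X) : Sym X K :=
  ⟨Multiset.map v Finset.univ.val, by simp⟩
noncomputable def arr {X : Type*} [Fintype X] [DecidableEq X] {K : ℕ} (φ : Sym X K) :
    (Fin K → X) → ℝ :=
  fun v => if acc v = φ then 1 / coefm K φ else 0
noncomputable def Mchan {X Y : Type*} [Fintype X] [DecidableEq X] [Fintype Y] [DecidableEq Y]
    {K : ℕ} (c : X → Y → ℝ) : Sym X K → Sym Y K → ℝ :=
  fun φ ψ => ∑ v : Fin K → X, arr φ v *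
    ∑ w : Fin K → Y, (∏ i, c (v i) (w i)) * (if acc w = ψ then 1 else 0)
open Classical in
noncomputable def klE {Z : Type*} [Fintype Z] (ω ρ : Z → ℝ) : EReal :=
  if ∀ z, ω z ≠ 0 → ρ z ≠ 0 then ((∑ z, ω z * Real.log (ω z / ρ z) : ℝ) : EReal) else ⊤


lemma acc_cons' {Y : Type*} [Fintype Y] {K:ℕ} (y:Y) (v:Fin K → Y) :
    Multiset.map (Fin.cons y v : Fin (K+1) → Y) Finset.univ.val
      = y ::ₘ Multiset.map v Finset.univ.val := by
  rw [Fin.univ_val_map, Fin.univ_val_map, List.ofFn_succ]; simp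

lemma count_lemma {Y : Type*} [Fintype Y] [DecidableEq Y] (K : ℕ) (m : Multiset Y)
    (hm : Multiset.card m = K) :
    ∑ v : Fin K → Y, (if Multiset.map v Finset.univ.val = m then (1:ℝ) else 0)
      = (K.factorial : ℝ) / ∏ y, ((m.count y).factorial : ℝ) := by
  induction K generalizing m with
  | zero =>
    have : m = 0 := Multiset.card_eq_zero.mp hm
    subst this
    simp
  | succ K ih =>
    rw [← Equiv.sum_comp (Fin.consEquiv (fun _ : Fin (K+1) => Y))
      (fun v => if Multiset.map v Finset.univ.val = m then (1:ℝ) else 0), Fintype.sum_prod_type]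
    simp only [Fin.consEquiv, Equiv.coe_fn_mk]
    have hinner : ∀ y : Y, (∑ v : Fin K → Y,
        (if Multiset.map (Fin.cons y v : Fin (K+1) → Y) Finset.univ.val = m then (1:ℝ) else 0))
        = if y ∈ m then (K.factorial : ℝ) / ∏ x, (((m.erase y).count x).factorial : ℝ) else 0 := by
      intro y
      by_cases hy : y ∈ m
      · rw [if_pos hy, ← ih (m.erase y) (by rw [Multiset.card_erase_of_mem hy, hm]; rfl)]
        refine Finset.sum_congr rfl fun v _ => ?_
        rw [acc_cons']
        refine if_congr ⟨?_, ?_⟩ rfl rfl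
        · intro h
          rw [← h, Multiset.erase_cons_head]
        · intro h
          rw [h, Multiset.cons_erase hy]
      · rw [if_neg hy]
        refine Finset.sum_eq_zero fun v _ => ?_
        rw [if_neg]
        intro h
        refine hy ?_
        rw [← h, acc_cons']
        exact Multiset.mem_cons_self y _
    refine (Finset.sum_congr rfl fun y _ => hinner y).trans ?_
    have key : ∀ y ∈ m, ∏ x, (((m.erase y).count x).factorial : ℝ)
        = (∏ x, ((m.count x).factorial : ℝ)) / (m.count y : ℝ) := by
      intro y hy
      have hcy : 1 ≤ m.count y := Multiset.one_le_count_iff_mem.mpr hy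
      rw [eq_div_iff (by positivity : (m.count y : ℝ) ≠ 0)]
      rw [← Finset.prod_erase_mul Finset.univ _ (Finset.mem_univ y),
        ← Finset.prod_erase_mul Finset.univ (fun x => ((m.count x).factorial : ℝ)) (Finset.mem_univ y)]
      rw [mul_assoc]
      congr 1
      · refine Finset.prod_congr rfl fun x hx => ?_
        rw [Multiset.count_erase_of_ne (Finset.mem_erase.mp hx).1]
      · rw [Multiset.count_erase_self, ← Nat.cast_mul]
        congr 1
        rw [mul_comm]
        exact Nat.mul_factorial_pred (by omega)
    have hcount_sum : ∑ y : Y, (m.count y : ℝ) = ((K+1 : ℕ) : ℝ) := by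
      rw [← hm, ← Nat.cast_sum]
      congr 1
      rw [← Multiset.toFinset_sum_count_eq m]
      refine (Finset.sum_subset (Finset.subset_univ _) fun x _ hx => ?_).symm
      simp [Multiset.count_eq_zero_of_notMem (by simpa using hx)]
    have step : ∀ y : Y, (if y ∈ m then (K.factorial : ℝ) / ∏ x, (((m.erase y).count x).factorial : ℝ) else 0)
        = (K.factorial : ℝ) * (m.count y : ℝ) / ∏ x, ((m.count x).factorial : ℝ) := by
      intro y
      by_cases hy : y ∈ m
      · rw [if_pos hy, key y hy]
        have hfac_pos : (0:ℝ) < ∏ x, ((m.count x).factorial : ℝ) :=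
          Finset.prod_pos fun x _ => by positivity
        have hcy : (0:ℝ) < (m.count y : ℝ) := by
          exact_mod_cast Multiset.one_le_count_iff_mem.mpr hy
        field_simp
      · rw [if_neg hy, Multiset.count_eq_zero_of_notMem hy]
        simp
    simp only [step]
    rw [← Finset.sum_div, ← Finset.mul_sum, hcount_sum]
    congr 1
    rw [Nat.factorial_succ, Nat.cast_mul, mul_comm]

lemma prod_lemma {Y : Type*} [Fintype Y] [DecidableEq Y] {K : ℕ} (τ : Y → ℝ) (m : Multiset Y)
    (v : Fin K → Y) (h : Multiset.map v Finset.univ.val = m) :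
    ∏ i, τ (v i) = ∏ y, τ y ^ m.count y := by
  have h1 : ∏ i, τ (v i) = (m.map τ).prod := by
    rw [← h, Multiset.map_map]; rfl
  rw [h1, Finset.prod_multiset_map_count]
  refine Finset.prod_subset (Finset.subset_univ _) fun x _ hx => ?_
  simp [Multiset.count_eq_zero_of_notMem (by simpa using hx)]

theorem stmt14 {Y : Type*} [Fintype Y] [DecidableEq Y] (K : ℕ) (hK : 1 ≤ K)
    (τ : Y → ℝ) (hτ : IsDist τ) (ψ : Sym Y K) (hψ : multinom K τ ψ ≠ 0) :
    ∀ w : Fin K → Y,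
      dagger (fun (w : Fin K → Y) (ψ' : Sym Y K) => if acc w = ψ' then (1:ℝ) else 0)
        (fun w => ∏ i, τ (w i)) ψ w
      = arr ψ w := by
  intro w
  set P : ℝ := ∏ y, τ y ^ ((ψ : Multiset Y).count y) with hP
  have hcoefm : coefm K ψ ≠ 0 := fun h => hψ (by rw [multinom, h, zero_mul])
  have hPne : P ≠ 0 := fun h => hψ (by rw [multinom, ← hP, h, mul_zero])
  have hacc : ∀ v : Fin K → Y, acc v = ψ ↔ Multiset.map v Finset.univ.val = (ψ : Multiset Y) :=
    fun v => Subtype.ext_iff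
  have hpush : push (fun (w : Fin K → Y) (ψ' : Sym Y K) => if acc w = ψ' then (1:ℝ) else 0)
      (fun w => ∏ i, τ (w i)) ψ = coefm K ψ * P := by
    rw [push]
    have : ∀ v : Fin K → Y, (∏ i, τ (v i)) * (if acc v = ψ then (1:ℝ) else 0)
        = (if Multiset.map v Finset.univ.val = (ψ : Multiset Y) then (1:ℝ) else 0) * P := by
      intro v
      by_cases h : acc v = ψ
      · rw [if_pos h, if_pos ((hacc v).mp h), prod_lemma τ _ v ((hacc v).mp h), one_mul, mul_one]
      · rw [if_neg h, if_neg (fun hh => h ((hacc v).mpr hh)), mul_zero, zero_mul]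
    simp only [this]
    rw [← Finset.sum_mul, count_lemma K (ψ : Multiset Y) ψ.2]
    rfl
  rw [dagger, hpush, arr]
  by_cases h : acc w = ψ
  · rw [if_pos h, if_pos h, prod_lemma τ _ w ((hacc w).mp h), ← hP, mul_one]
    rw [mul_comm (coefm K ψ) P]
    field_simp
  · rw [if_neg h, if_neg h, mul_zero, zero_div]
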